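/- Let S be an m×n sign matrix (all entries in {+1, −1}). Then the sign-rank of S satisfies signrank(S) ≤ SC*(S) + 1, where SC*(S) is the minimum over all row permutations S′ of S of the maximum number of sign changes in any column of S′. -/
import Mathlib

/-- The sign-rank of an `m × n` sign matrix `S`: the minimum rank of a real matrix `M`
with `S i j * M i j > 0` for all `i, j`. -/
noncomputable def signRank {m n : ℕ} (S : Matrix (Fin m) (Fin n) ℝ) : ℕ :=
  sInf {r : ℕ | ∃ M : Matrix (Fin m) (Fin n) ℝ, M.rank = r ∧ ∀ i j, S i j * M i j > 0}

/-- `SC S`: the maximum, over all columns `j`, of the number of sign changes in column `j`,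
i.e. of pairs of consecutive row indices where the entries of column `j` differ. -/
noncomputable def maxColSignChanges {m n : ℕ} (S : Matrix (Fin m) (Fin n) ℝ) : ℕ :=
  Finset.univ.sup fun j : Fin n =>
    Nat.card {p : Fin m × Fin m // (p.2 : ℕ) = (p.1 : ℕ) + 1 ∧ S p.1 j ≠ S p.2 j}

/-- `SC* S`: the minimum of `SC S'` over all matrices `S'` obtained from `S` by
permuting its rows. -/
noncomputable def minMaxColSignChanges {m n : ℕ} (S : Matrix (Fin m) (Fin n) ℝ) : ℕ :=
  ⨅ σ : Equiv.Perm (Fin m), maxColSignChanges (S.submatrix σ id)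

private lemma prod_neg_aux (s : Finset ℕ) (f : ℕ → ℝ) :
    ∏ t ∈ s, (-(f t)) = (-1) ^ s.card * ∏ t ∈ s, f t := by
  rw [← Finset.prod_const, ← Finset.prod_mul_distrib]; simp

private lemma key_lemma {m n : ℕ} (hm : 0 < m) (S : Matrix (Fin m) (Fin n) ℝ)
    (hS : ∀ i j, S i j = 1 ∨ S i j = -1) (σ : Equiv.Perm (Fin m)) :
    ∃ M : Matrix (Fin m) (Fin n) ℝ,
      M.rank ≤ maxColSignChanges (S.submatrix σ id) + 1 ∧ ∀ i j, S i j * M i j > 0 := by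
  classical
  set T : Matrix (Fin m) (Fin n) ℝ := S.submatrix σ id with hTdef
  set k := maxColSignChanges T with hk
  -- clamping function
  let u : ℕ → Fin m := fun i => ⟨min i (m - 1), by omega⟩
  have hu : ∀ i (h : i < m), u i = ⟨i, h⟩ := by
    intro i h
    simp only [u, Fin.mk.injEq]
    omega
  -- sign-change sets
  let F : Fin n → Finset ℕ := fun j =>
    (Finset.range (m - 1)).filter fun t => T (u t) j ≠ T (u (t + 1)) j
  -- cardinality bound
  have hFcard : ∀ j, (F j).card ≤ k := by
    intro j
    have hprop : ∀ t : {t // t ∈ F j},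
        ((u ((t : ℕ) + 1) : Fin m) : ℕ) = ((u (t : ℕ) : Fin m) : ℕ) + 1 ∧
          T (u (t : ℕ)) j ≠ T (u ((t : ℕ) + 1)) j := by
      intro t
      have ht := t.2
      simp only [F, Finset.mem_filter, Finset.mem_range] at ht
      refine ⟨?_, ht.2⟩
      simp only [u]
      omega
    have hinj : Function.Injective
        (fun t : {t // t ∈ F j} =>
          (⟨(u (t : ℕ), u ((t : ℕ) + 1)), hprop t⟩ :
            {p : Fin m × Fin m // (p.2 : ℕ) = (p.1 : ℕ) + 1 ∧ T p.1 j ≠ T p.2 j})) := by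
      intro a b hab
      have ha := a.2; have hb := b.2
      simp only [F, Finset.mem_filter, Finset.mem_range] at ha hb
      have := congrArg (fun x => (((x : {p : Fin m × Fin m // (p.2 : ℕ) = (p.1 : ℕ) + 1 ∧ T p.1 j ≠ T p.2 j}) : Fin m × Fin m).1 : ℕ)) hab
      simp only [u] at this
      exact Subtype.ext (by omega)
    have h1 : (F j).card = Nat.card {t // t ∈ F j} := by
      rw [Nat.card_eq_fintype_card, Fintype.card_coe]
    have h2 := Nat.card_le_card_of_injective _ hinj
    rw [hk, maxColSignChanges]
    calc (F j).card ≤ Nat.card {p : Fin m × Fin m // (p.2 : ℕ) = (p.1 : ℕ) + 1 ∧ T p.1 j ≠ T p.2 j} := by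
          rw [h1]; exact h2
      _ ≤ _ := Finset.le_sup (f := fun j : Fin n =>
          Nat.card {p : Fin m × Fin m // (p.2 : ℕ) = (p.1 : ℕ) + 1 ∧ T p.1 j ≠ T p.2 j})
          (Finset.mem_univ j)
  -- sign flip formula
  have hsign : ∀ i j, i < m →
      T (u i) j = T (u 0) j * (-1) ^ (((F j).filter (· < i)).card) := by
    intro i j hi
    induction i with
    | zero => simp
    | succ i ih =>
      have hi' : i < m := by omega
      have hprev := ih hi'
      by_cases hmem : i ∈ F j
      · have hset : (F j).filter (· < i + 1) = insert i ((F j).filter (· < i)) := by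
          ext t
          simp only [Finset.mem_filter, Finset.mem_insert]
          constructor
          · rintro ⟨ht, hlt⟩
            rcases Nat.lt_succ_iff_lt_or_eq.mp hlt with h | h
            · exact Or.inr ⟨ht, h⟩
            · exact Or.inl h
          · rintro (rfl | ⟨ht, hlt⟩)
            · exact ⟨hmem, Nat.lt_succ_self _⟩
            · exact ⟨ht, Nat.lt_succ_of_lt hlt⟩
        have hnotmem : i ∉ (F j).filter (· < i) := by
          simp [Finset.mem_filter]
        have hne : T (u i) j ≠ T (u (i + 1)) j := by
          simp only [F, Finset.mem_filter, Finset.mem_range] at hmem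
          exact hmem.2
        have hflip : T (u (i + 1)) j = -T (u i) j := by
          rcases hS (σ (u i)) j with h1 | h1 <;> rcases hS (σ (u (i + 1))) j with h2 | h2 <;>
            simp only [hTdef, Matrix.submatrix_apply, id] at hne ⊢ <;> simp_all
        rw [hflip, hprev, hset, Finset.card_insert_of_notMem hnotmem, pow_succ]
        ring
      · have hset : (F j).filter (· < i + 1) = (F j).filter (· < i) := by
          ext t
          simp only [Finset.mem_filter]
          constructor
          · rintro ⟨ht, hlt⟩
            rcases Nat.lt_succ_iff_lt_or_eq.mp hlt with h | h
            · exact ⟨ht, h⟩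
            · exact absurd (h ▸ ht) hmem
          · rintro ⟨ht, hlt⟩
            exact ⟨ht, Nat.lt_succ_of_lt hlt⟩
        have heq : T (u i) j = T (u (i + 1)) j := by
          by_contra hne
          apply hmem
          simp only [F, Finset.mem_filter, Finset.mem_range]
          exact ⟨by omega, hne⟩
        rw [← heq, hprev, hset]
  -- the polynomials
  let p : Fin n → Polynomial ℝ := fun j =>
    ∏ t ∈ F j, (Polynomial.C ((t : ℝ) + 1 / 2) - Polynomial.X)
  have hdeg : ∀ j, (p j).natDegree < k + 1 := by
    intro j
    have h1 : (p j).natDegree ≤ ∑ t ∈ F j, (Polynomial.C ((t : ℝ) + 1 / 2) - Polynomial.X).natDegree :=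
      Polynomial.natDegree_prod_le _ _
    have h2 : ∀ t : ℕ, (Polynomial.C ((t : ℝ) + 1 / 2) - Polynomial.X).natDegree = 1 := by
      intro t
      have : Polynomial.C ((t : ℝ) + 1 / 2) - Polynomial.X
          = -(Polynomial.X - Polynomial.C ((t : ℝ) + 1 / 2)) := by ring
      rw [this, Polynomial.natDegree_neg, Polynomial.natDegree_X_sub_C]
    calc (p j).natDegree ≤ ∑ t ∈ F j, (Polynomial.C ((t : ℝ) + 1 / 2) - Polynomial.X).natDegree := h1
      _ = ∑ _t ∈ F j, 1 := Finset.sum_congr rfl (fun t _ => h2 t)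
      _ = (F j).card := by simp
      _ ≤ k := hFcard j
      _ < k + 1 := Nat.lt_succ_self k
  -- the factorization
  let V : Matrix (Fin m) (Fin (k + 1)) ℝ := fun i t => (((σ⁻¹ i : Fin m) : ℕ) : ℝ) ^ (t : ℕ)
  let Cm : Matrix (Fin (k + 1)) (Fin n) ℝ := fun t j => T (u 0) j * (p j).coeff t
  refine ⟨V * Cm, ?_, ?_⟩
  · calc (V * Cm).rank ≤ V.rank := Matrix.rank_mul_le_left V Cm
      _ ≤ Fintype.card (Fin (k + 1)) := Matrix.rank_le_card_width V
      _ = k + 1 := Fintype.card_fin _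
  · intro i j
    set i₀ : Fin m := σ⁻¹ i with hi₀
    have hSi : S i j = T (u (i₀ : ℕ)) j := by
      rw [hu _ i₀.isLt]
      simp [hTdef, hi₀]
    have hMij : (V * Cm) i j = T (u 0) j * (p j).eval ((i₀ : ℕ) : ℝ) := by
      rw [Polynomial.eval_eq_sum_range' (hdeg j), Matrix.mul_apply, Finset.mul_sum,
        ← Fin.sum_univ_eq_sum_range (fun t => T (u 0) j * ((p j).coeff t * ((i₀ : ℕ) : ℝ) ^ t)) (k + 1)]
      apply Finset.sum_congr rfl
      intro t _
      simp only [V, Cm, hi₀]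
      ring
    have heval : (p j).eval ((i₀ : ℕ) : ℝ) = ∏ t ∈ F j, ((t : ℝ) + 1 / 2 - ((i₀ : ℕ) : ℝ)) := by
      simp [p, Polynomial.eval_prod]
    set c := ((F j).filter (· < (i₀ : ℕ))).card with hc
    have hpos : (0 : ℝ) < (-1) ^ c * (p j).eval ((i₀ : ℕ) : ℝ) := by
      rw [heval, ← Finset.prod_filter_mul_prod_filter_not (F j) (· < (i₀ : ℕ)), ← mul_assoc, hc]
      have hA : (-1 : ℝ) ^ ((F j).filter (· < (i₀ : ℕ))).card *
          ∏ t ∈ (F j).filter (· < (i₀ : ℕ)), ((t : ℝ) + 1 / 2 - ((i₀ : ℕ) : ℝ))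
          = ∏ t ∈ (F j).filter (· < (i₀ : ℕ)), (-(((t : ℝ) + 1 / 2 - ((i₀ : ℕ) : ℝ)))) := by
        rw [prod_neg_aux]
      rw [hA]
      apply mul_pos
      · apply Finset.prod_pos
        intro t ht
        simp only [Finset.mem_filter] at ht
        have : (t : ℕ) + 1 ≤ (i₀ : ℕ) := ht.2
        have hcast : (t : ℝ) + 1 ≤ ((i₀ : ℕ) : ℝ) := by exact_mod_cast this
        linarith
      · apply Finset.prod_pos
        intro t ht
        simp only [Finset.mem_filter, not_lt] at ht
        have : (i₀ : ℕ) ≤ t := ht.2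
        have hcast : ((i₀ : ℕ) : ℝ) ≤ (t : ℝ) := by exact_mod_cast this
        linarith
    have hsq : T (u 0) j * T (u 0) j = 1 := by
      rcases hS (σ (u 0)) j with h | h <;>
        simp only [hTdef, Matrix.submatrix_apply, id] at * <;> rw [h] <;> norm_num
    have hflipi := hsign (i₀ : ℕ) j i₀.isLt
    calc S i j * (V * Cm) i j
        = (T (u 0) j * T (u 0) j) * ((-1) ^ c * (p j).eval ((i₀ : ℕ) : ℝ)) := by
          rw [hSi, hMij, hflipi]; ring
      _ = (-1) ^ c * (p j).eval ((i₀ : ℕ) : ℝ) := by rw [hsq, one_mul]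
      _ > 0 := hpos

/-- For any sign matrix `S`, `signrank S ≤ SC*(S) + 1`. -/
theorem signRank_le_minMaxColSignChanges_add_one {m n : ℕ}
    (S : Matrix (Fin m) (Fin n) ℝ) (hS : ∀ i j, S i j = 1 ∨ S i j = -1) :
    signRank S ≤ minMaxColSignChanges S + 1 := by
  rcases Nat.eq_zero_or_pos m with hm | hm
  · subst hm
    have h0 : (0 : ℕ) ∈ {r : ℕ | ∃ M : Matrix (Fin 0) (Fin n) ℝ, M.rank = r ∧
        ∀ i j, S i j * M i j > 0} := by
      refine ⟨0, ?_, fun i => i.elim0⟩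
      have := Matrix.rank_le_card_height (0 : Matrix (Fin 0) (Fin n) ℝ)
      simp only [Fintype.card_fin] at this
      omega
    exact le_trans (Nat.sInf_le h0) (Nat.zero_le _)
  · have hne : (Set.range fun σ : Equiv.Perm (Fin m) =>
        maxColSignChanges (S.submatrix σ id)).Nonempty := Set.range_nonempty _
    obtain ⟨σ, hσ⟩ := Nat.sInf_mem hne
    have hmin : minMaxColSignChanges S = maxColSignChanges (S.submatrix σ id) := hσ.symm
    obtain ⟨M, hrank, hpos⟩ := key_lemma hm S hS σ
    have hmem : M.rank ∈ {r : ℕ | ∃ M' : Matrix (Fin m) (Fin n) ℝ, M'.rank = r ∧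
        ∀ i j, S i j * M' i j > 0} := ⟨M, rfl, hpos⟩
    calc signRank S ≤ M.rank := Nat.sInf_le hmem
      _ ≤ maxColSignChanges (S.submatrix σ id) + 1 := hrank
      _ = minMaxColSignChanges S + 1 := by rw [hmin]
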